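/- Let 0 < α < 2, w ∈ ℝ, λ = λ₁ + iλ₂ with λ₂ > 0, C > 0, T* ≥ 1, and K₀ > 0 with λ₂ K₀^α < 1/4. Let v : [1,∞) → ℂ satisfy the model ODE with remainder r, where |r(t)| ≤ C t^{−5/4+α/2} for all t ≥ 1, and assume |v(t)| ≤ K₀ t^{1/2−1/α} for all t ≥ T*. Define Φ(t) = ∫₁ᵗ s^{−α/2} |v(s)|^α ds and z(t) = v(t) e^{−i(w t + λ Φ(t))}. Then there exist z₊ ∈ ℂ and C′ > 0 such that |z(t) − z₊| ≤ C′ t^{−1/4 + λ₂ K₀^α} for all t ≥ 1. -/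

import Mathlib

open Real Set

noncomputable section

/-- `v` satisfies the model ODE
`v′(t) = i (w v(t) + λ t^{−α/2} |v(t)|^α v(t) + t^{−α/2} r(t))`
with continuous remainder `r` on the set `I ⊆ [1,∞)`. -/
def SatisfiesModelODE (α w : ℝ) (lam : ℂ) (v r : ℝ → ℂ) (I : Set ℝ) : Prop :=
  ContinuousOn r I ∧
  ∀ t ∈ I, HasDerivWithinAt v
    (Complex.I * ((w : ℂ) * v t
      + lam * ((t ^ (-α / 2) : ℝ) : ℂ) * ((‖v t‖ ^ α : ℝ) : ℂ) * v t
      + ((t ^ (-α / 2) : ℝ) : ℂ) * r t)) I t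

/-- `Φ(t) = ∫₁ᵗ s^{−α/2} |v(s)|^α ds`. -/
def Phi (α : ℝ) (v : ℝ → ℂ) (t : ℝ) : ℝ :=
  ∫ s in (1:ℝ)..t, s ^ (-α / 2) * ‖v s‖ ^ α

/-- `z(t) = v(t) e^{−i(w t + λ Φ(t))}`. -/
def zfun (α w : ℝ) (lam : ℂ) (v : ℝ → ℂ) (t : ℝ) : ℂ :=
  v t * Complex.exp (-(Complex.I) * ((w : ℂ) * (t : ℂ) + lam * (Phi α v t : ℝ)))

open MeasureTheory

/-- For `0 < α < 2`, `λ₂ > 0`, `λ₂ K₀^α < 1/4`, solutions of the model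
ODE with `|r(t)| ≤ C t^{−5/4+α/2}` and `|v(t)| ≤ K₀ t^{1/2−1/α}` for `t ≥ T*` have a
modified limit: there exist `z₊ ∈ ℂ` and `C′ > 0` with
`|z(t) − z₊| ≤ C′ t^{−1/4 + λ₂ K₀^α}` for all `t ≥ 1`. -/
theorem modified_limit_exists (α w : ℝ) (hα1 : 0 < α) (hα2 : α < 2)
    (lam : ℂ) (hlam : 0 < lam.im)
    (C Tstar K₀ : ℝ) (hC : 0 < C) (hT : 1 ≤ Tstar) (hK₀ : 0 < K₀)
    (hKcond : lam.im * K₀ ^ α < 1 / 4)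
    (v r : ℝ → ℂ)
    (hode : SatisfiesModelODE α w lam v r (Ici 1))
    (hr : ∀ t : ℝ, 1 ≤ t → ‖r t‖ ≤ C * t ^ (-(5:ℝ)/4 + α/2))
    (hv : ∀ t : ℝ, Tstar ≤ t → ‖v t‖ ≤ K₀ * t ^ ((1:ℝ)/2 - 1/α)) :
    ∃ zplus : ℂ, ∃ C' : ℝ, 0 < C' ∧ ∀ t : ℝ, 1 ≤ t →
      ‖zfun α w lam v t - zplus‖ ≤ C' * t ^ (-(1:ℝ)/4 + lam.im * K₀ ^ α) := by
  obtain ⟨hrcont, hvderiv⟩ := hode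
  have hvcont : ContinuousOn v (Ici 1) := fun t ht => (hvderiv t ht).continuousWithinAt
  -- the integrand of Phi
  set g : ℝ → ℝ := fun s => s ^ (-α / 2) * ‖v s‖ ^ α with hg_def
  have hgcont : ContinuousOn g (Ici 1) := by
    apply ContinuousOn.mul
    · exact fun s hs => (Real.continuousAt_rpow_const s _
        (Or.inl (ne_of_gt (lt_of_lt_of_le zero_lt_one hs)))).continuousWithinAt
    · exact hvcont.norm.rpow_const (fun s _ => Or.inr hα1.le)
  have hgint : ∀ a b : ℝ, 1 ≤ a → a ≤ b → IntervalIntegrable g volume a b := by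
    intro a b ha hab
    exact (hgcont.mono (by rw [uIcc_of_le hab]; exact fun x hx => le_trans ha hx.1)).intervalIntegrable
  have hΦderiv : ∀ t ∈ Ioi (1:ℝ), HasDerivAt (Phi α v) (g t) t := by
    intro t ht
    exact intervalIntegral.integral_hasDerivAt_right (hgint 1 t le_rfl ht.le)
      ((hgcont.mono Ioi_subset_Ici_self).stronglyMeasurableAtFilter isOpen_Ioi t ht)
      ((hgcont t (Set.mem_Ici.mpr (Set.mem_Ioi.mp ht).le)).continuousAt (Ici_mem_nhds ht))
  have hΦcont : ContinuousOn (Phi α v) (Ici 1) := by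
    intro t ht
    rcases eq_or_lt_of_le (Set.mem_Ici.mp ht) with h | h
    · subst h
      have : HasDerivWithinAt (Phi α v) (g 1) (Ici 1) 1 :=
        intervalIntegral.integral_hasDerivWithinAt_right (s := Ici (1:ℝ)) (t := Ioi (1:ℝ))
          (hgint 1 1 le_rfl le_rfl)
          ⟨Ioi 1, self_mem_nhdsWithin,
            ((hgcont.mono Ioi_subset_Ici_self).aestronglyMeasurable measurableSet_Ioi)⟩
          ((hgcont 1 Set.self_mem_Ici).mono Ioi_subset_Ici_self)
      exact this.continuousWithinAt
    · exact ((hΦderiv t h).continuousAt).continuousWithinAt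
  -- the exponential factor
  set E : ℝ → ℂ := fun t => Complex.exp (-(Complex.I) * ((w : ℂ) * (t : ℂ) + lam * (Phi α v t : ℝ)))
    with hE_def
  have hEcont : ContinuousOn E (Ici 1) := by
    apply Complex.continuous_exp.comp_continuousOn
    apply ContinuousOn.mul continuousOn_const
    apply ContinuousOn.add
    · exact (continuous_const.mul (Complex.continuous_ofReal)).continuousOn
    · exact continuousOn_const.mul (Complex.continuous_ofReal.comp_continuousOn hΦcont)
  have hzcont : ContinuousOn (zfun α w lam v) (Ici 1) := hvcont.mul hEcont
  -- the derivative of z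
  set zd : ℝ → ℂ := fun t => Complex.I * ((t ^ (-α / 2) : ℝ) : ℂ) * r t * E t with hzd_def
  have hzdcont : ContinuousOn zd (Ici 1) := by
    apply ContinuousOn.mul _ hEcont
    apply ContinuousOn.mul _ hrcont
    apply ContinuousOn.mul continuousOn_const
    apply Complex.continuous_ofReal.comp_continuousOn
    exact fun s hs => (Real.continuousAt_rpow_const s _
      (Or.inl (ne_of_gt (lt_of_lt_of_le zero_lt_one hs)))).continuousWithinAt
  have hzderiv : ∀ t ∈ Ioi (1:ℝ), HasDerivAt (zfun α w lam v) (zd t) t := by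
    intro t ht
    have hv' : HasDerivAt v
        (Complex.I * ((w : ℂ) * v t
          + lam * ((t ^ (-α / 2) : ℝ) : ℂ) * ((‖v t‖ ^ α : ℝ) : ℂ) * v t
          + ((t ^ (-α / 2) : ℝ) : ℂ) * r t)) t :=
      (hvderiv t (Set.mem_Ici.mpr (Set.mem_Ioi.mp ht).le)).hasDerivAt (Ici_mem_nhds ht)
    have hΦ' : HasDerivAt (fun s : ℝ => ((Phi α v s : ℝ) : ℂ)) ((g t : ℝ) : ℂ) t :=
      (hΦderiv t ht).ofReal_comp
    have hid : HasDerivAt (fun s : ℝ => ((s : ℝ) : ℂ)) 1 t := by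
      simpa using (hasDerivAt_id t).ofReal_comp
    have hinner : HasDerivAt
        (fun s : ℝ => -(Complex.I) * ((w : ℂ) * (s : ℂ) + lam * ((Phi α v s : ℝ) : ℂ)))
        (-(Complex.I) * ((w : ℂ) + lam * ((g t : ℝ) : ℂ))) t := by
      have := ((hid.const_mul (w : ℂ)).add (hΦ'.const_mul lam)).const_mul (-(Complex.I))
      simpa [mul_one] using this
    have hE' : HasDerivAt E
        (E t * (-(Complex.I) * ((w : ℂ) + lam * ((g t : ℝ) : ℂ)))) t := hinner.cexp
    have hz : HasDerivAt (zfun α w lam v)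
        (Complex.I * ((w : ℂ) * v t
          + lam * ((t ^ (-α / 2) : ℝ) : ℂ) * ((‖v t‖ ^ α : ℝ) : ℂ) * v t
          + ((t ^ (-α / 2) : ℝ) : ℂ) * r t) * E t
         + v t * (E t * (-(Complex.I) * ((w : ℂ) + lam * ((g t : ℝ) : ℂ))))) t := hv'.mul hE'
    have hgc : ((g t : ℝ) : ℂ) = ((t ^ (-α / 2) : ℝ) : ℂ) * ((‖v t‖ ^ α : ℝ) : ℂ) := by
      rw [hg_def]; push_cast; ring
    convert hz using 1
    rw [hzd_def, hgc]
    ring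
  -- bound on Phi
  obtain ⟨M, hM⟩ := (isCompact_Icc (a := (1:ℝ)) (b := Tstar)).exists_bound_of_continuousOn
    (hvcont.mono (fun x hx => hx.1))
  have hM0 : 0 ≤ M := le_trans (norm_nonneg (v 1)) (hM 1 ⟨le_rfl, hT⟩)
  set A : ℝ := M ^ α * (Tstar - 1) with hA_def
  have hA0 : 0 ≤ A := mul_nonneg (Real.rpow_nonneg hM0 α) (by linarith)
  have hcase1 : ∀ t : ℝ, 1 ≤ t → t ≤ Tstar → Phi α v t ≤ A := by
    intro t ht1 ht2
    have hmono : Phi α v t ≤ ∫ s in (1:ℝ)..t, M ^ α := by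
      apply intervalIntegral.integral_mono_on ht1 (hgint 1 t le_rfl ht1)
        intervalIntegrable_const
      intro s hs
      have hs1 : (1:ℝ) ≤ s := hs.1
      have h1 : s ^ (-α / 2) ≤ 1 :=
        Real.rpow_le_one_of_one_le_of_nonpos hs1 (by linarith)
      have h2 : ‖v s‖ ^ α ≤ M ^ α :=
        Real.rpow_le_rpow (norm_nonneg _) (hM s ⟨hs1, le_trans hs.2 ht2⟩) hα1.le
      calc g s ≤ 1 * (M ^ α) :=
            mul_le_mul h1 h2 (Real.rpow_nonneg (norm_nonneg _) α) zero_le_one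
        _ = M ^ α := one_mul _
    rw [intervalIntegral.integral_const, smul_eq_mul] at hmono
    have : (t - 1) * M ^ α ≤ (Tstar - 1) * M ^ α :=
      mul_le_mul_of_nonneg_right (by linarith) (Real.rpow_nonneg hM0 α)
    rw [hA_def]; linarith
  have hΦle : ∀ t : ℝ, 1 ≤ t → Phi α v t ≤ A + K₀ ^ α * Real.log t := by
    intro t ht1
    have hlog0 : 0 ≤ Real.log t := Real.log_nonneg ht1
    have hK0α : 0 ≤ K₀ ^ α := Real.rpow_nonneg hK₀.le α
    rcases le_or_gt t Tstar with hle | hgt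
    · have := hcase1 t ht1 hle
      nlinarith
    · have hsplit : Phi α v t = Phi α v Tstar + ∫ s in Tstar..t, g s := by
        rw [Phi, Phi, ← hg_def]
        rw [← intervalIntegral.integral_add_adjacent_intervals (hgint 1 Tstar le_rfl hT)
          (hgint Tstar t hT hgt.le)]
      have htail : ∫ s in Tstar..t, g s ≤ ∫ s in Tstar..t, K₀ ^ α * s⁻¹ := by
        apply intervalIntegral.integral_mono_on hgt.le (hgint Tstar t hT hgt.le)
        · apply ContinuousOn.intervalIntegrable
          apply continuousOn_const.mul
          exact continuousOn_inv₀.mono (fun x hx => by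
            rw [uIcc_of_le hgt.le] at hx
            exact ne_of_gt (lt_of_lt_of_le (lt_of_lt_of_le zero_lt_one hT) hx.1))
        · intro s hs
          have hsT : Tstar ≤ s := hs.1
          have hs0 : (0:ℝ) < s := lt_of_lt_of_le (lt_of_lt_of_le zero_lt_one hT) hsT
          have h1 : ‖v s‖ ^ α ≤ (K₀ * s ^ ((1:ℝ)/2 - 1/α)) ^ α :=
            Real.rpow_le_rpow (norm_nonneg _) (hv s hsT) hα1.le
          have h2 : (K₀ * s ^ ((1:ℝ)/2 - 1/α)) ^ α = K₀ ^ α * s ^ (α/2 - 1) := by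
            rw [Real.mul_rpow hK₀.le (Real.rpow_nonneg hs0.le _), ← Real.rpow_mul hs0.le]
            congr 2
            field_simp
          have h3 : g s ≤ s ^ (-α/2) * (K₀ ^ α * s ^ (α/2 - 1)) := by
            rw [hg_def]
            have : (-α / 2 : ℝ) = -α/2 := by ring
            rw [this]
            exact mul_le_mul_of_nonneg_left (h2 ▸ h1) (Real.rpow_nonneg hs0.le _)
          have h4 : s ^ (-α/2) * (K₀ ^ α * s ^ (α/2 - 1)) = K₀ ^ α * s⁻¹ := by
            rw [mul_comm (s ^ (-α/2)), mul_assoc, ← Real.rpow_add hs0,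
              show (α/2 - 1 + -α/2 : ℝ) = -1 by ring, Real.rpow_neg_one]
          linarith [h3, h4 ▸ h3]
      have hint_eval : ∫ s in Tstar..t, K₀ ^ α * s⁻¹ = K₀ ^ α * Real.log (t / Tstar) := by
        rw [intervalIntegral.integral_const_mul,
          integral_inv_of_pos (lt_of_lt_of_le zero_lt_one hT)
            (lt_of_lt_of_le zero_lt_one (le_trans hT hgt.le))]
      have hlogT : Real.log (t / Tstar) ≤ Real.log t := by
        rw [Real.log_div (by positivity) (by positivity)]
        have := Real.log_nonneg hT
        linarith
      have h5 := hcase1 Tstar hT le_rfl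
      have h6 : K₀ ^ α * Real.log (t / Tstar) ≤ K₀ ^ α * Real.log t :=
        mul_le_mul_of_nonneg_left hlogT hK0α
      rw [hsplit]
      linarith [htail, hint_eval ▸ htail]
  -- norm of E
  have hEnorm : ∀ t : ℝ, ‖E t‖ = Real.exp (lam.im * Phi α v t) := by
    intro t
    rw [hE_def]
    simp only [Complex.norm_exp]
    congr 1
    simp [Complex.mul_re, Complex.mul_im]
  set β : ℝ := lam.im * K₀ ^ α with hβ_def
  have hβ0 : 0 < β := mul_pos hlam (Real.rpow_pos_of_pos hK₀ α)
  have hβ14 : β < 1/4 := hKcond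
  set B : ℝ := C * Real.exp (lam.im * A) with hB_def
  have hB0 : 0 < B := mul_pos hC (Real.exp_pos _)
  -- pointwise bound on zd
  have hzdbound : ∀ t : ℝ, 1 ≤ t → ‖zd t‖ ≤ B * t ^ (-(5:ℝ)/4 + β) := by
    intro t ht1
    have ht0 : (0:ℝ) < t := lt_of_lt_of_le zero_lt_one ht1
    have hnorm : ‖zd t‖ = t ^ (-α/2) * ‖r t‖ * Real.exp (lam.im * Phi α v t) := by
      rw [hzd_def]
      simp only [norm_mul, Complex.norm_I, one_mul, Complex.norm_real, hEnorm]
      rw [Real.norm_of_nonneg (Real.rpow_nonneg ht0.le _)]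
    have hexp : Real.exp (lam.im * Phi α v t) ≤ Real.exp (lam.im * A) * t ^ β := by
      have h1 : lam.im * Phi α v t ≤ lam.im * (A + K₀ ^ α * Real.log t) :=
        mul_le_mul_of_nonneg_left (hΦle t ht1) hlam.le
      calc Real.exp (lam.im * Phi α v t)
          ≤ Real.exp (lam.im * A + β * Real.log t) := by
            apply Real.exp_le_exp.2
            rw [hβ_def]; nlinarith
        _ = Real.exp (lam.im * A) * t ^ β := by
            rw [Real.exp_add, Real.rpow_def_of_pos ht0, mul_comm (Real.log t)]
    calc ‖zd t‖ = t ^ (-α/2) * ‖r t‖ * Real.exp (lam.im * Phi α v t) := hnorm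
      _ ≤ t ^ (-α/2) * (C * t ^ (-(5:ℝ)/4 + α/2)) * (Real.exp (lam.im * A) * t ^ β) := by
          refine mul_le_mul
            (mul_le_mul_of_nonneg_left (hr t ht1) (Real.rpow_nonneg ht0.le _))
            hexp (Real.exp_nonneg _) ?_
          have h1 : (0:ℝ) ≤ t ^ (-α/2) := Real.rpow_nonneg ht0.le _
          have h2 : (0:ℝ) ≤ t ^ (-(5:ℝ)/4 + α/2) := Real.rpow_nonneg ht0.le _
          positivity
      _ = B * t ^ (-(5:ℝ)/4 + β) := by
          rw [hB_def]
          rw [show t ^ (-α/2) * (C * t ^ (-(5:ℝ)/4 + α/2)) * (Real.exp (lam.im * A) * t ^ β)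
            = (C * Real.exp (lam.im * A)) * (t ^ (-α/2) * t ^ (-(5:ℝ)/4 + α/2) * t ^ β) by ring]
          rw [← Real.rpow_add ht0, ← Real.rpow_add ht0]
          congr 1
          ring
  have hexplt : (-(5:ℝ)/4 + β) < -1 := by linarith
  -- integrability of zd on Ioi 1
  have hBint : ∀ c : ℝ, 0 < c → IntegrableOn (fun s : ℝ => B * s ^ (-(5:ℝ)/4 + β)) (Ioi c) := by
    intro c hc
    exact (integrableOn_Ioi_rpow_of_lt hexplt hc).const_mul B
  have hzdint : IntegrableOn zd (Ioi 1) := by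
    apply Integrable.mono' (hBint 1 zero_lt_one)
    · exact (hzdcont.mono Ioi_subset_Ici_self).aestronglyMeasurable measurableSet_Ioi
    · filter_upwards [ae_restrict_mem measurableSet_Ioi] with x hx
      exact hzdbound x hx.le
  -- the limit
  refine ⟨zfun α w lam v 1 + ∫ s in Ioi 1, zd s, B / (1/4 - β), div_pos hB0 (by linarith), ?_⟩
  intro t ht1
  have ht0 : (0:ℝ) < t := lt_of_lt_of_le zero_lt_one ht1
  have hftc : ∫ s in (1:ℝ)..t, zd s = zfun α w lam v t - zfun α w lam v 1 := by
    apply intervalIntegral.integral_eq_sub_of_hasDeriv_right_of_le ht1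
      (hzcont.mono (fun x hx => hx.1))
      (fun x hx => (hzderiv x hx.1).hasDerivWithinAt)
    exact (hzdcont.mono (by rw [uIcc_of_le ht1]; exact fun x hx => hx.1)).intervalIntegrable
  have hIoc : IntegrableOn zd (Ioc 1 t) := hzdint.mono_set Ioc_subset_Ioi_self
  have hIoi : IntegrableOn zd (Ioi t) := hzdint.mono_set (Ioi_subset_Ioi ht1)
  have hsplit : ∫ s in Ioi 1, zd s = (∫ s in Ioc 1 t, zd s) + ∫ s in Ioi t, zd s := by
    rw [← setIntegral_union (Ioc_disjoint_Ioi le_rfl) measurableSet_Ioi hIoc hIoi,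
      Ioc_union_Ioi_eq_Ioi ht1]
  have hdiff : zfun α w lam v t - (zfun α w lam v 1 + ∫ s in Ioi 1, zd s)
      = -∫ s in Ioi t, zd s := by
    rw [hsplit, ← intervalIntegral.integral_of_le ht1, hftc]
    ring
  rw [hdiff, norm_neg]
  have hbound : ‖∫ s in Ioi t, zd s‖ ≤ ∫ s in Ioi t, B * s ^ (-(5:ℝ)/4 + β) := by
    apply MeasureTheory.norm_integral_le_of_norm_le (hBint t ht0)
    filter_upwards [ae_restrict_mem measurableSet_Ioi] with x hx
    exact hzdbound x (le_trans ht1 hx.le)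
  have heval : ∫ s in Ioi t, B * s ^ (-(5:ℝ)/4 + β)
      = B / (1/4 - β) * t ^ (-(1:ℝ)/4 + lam.im * K₀ ^ α) := by
    rw [integral_const_mul, integral_Ioi_rpow_of_lt hexplt ht0]
    rw [show (-(5:ℝ)/4 + β + 1) = -(1:ℝ)/4 + lam.im * K₀ ^ α by rw [hβ_def]; ring]
    rw [show (-(1:ℝ)/4 + lam.im * K₀ ^ α) = -(1/4 - β) by rw [hβ_def]; ring]
    rw [neg_div_neg_eq]
    ring
  rw [← heval]
  exact hbound


end
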